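/- Let A be an associative unital algebra over ℂ, let N ≥ 1, and for i = 1, 2 let (e_{i,1}, …, e_{i,N}) be idempotents in A such that the 2N elements e_{i,l} pairwise commute; set g_{i,l} := 1 − e_{i,l} and, for 0 ≤ k ≤ N, P_{i,k} := Σ_{S ⊆ {1,…,N}, |S| = k} (Π_{l ∈ S} g_{i,l}) · (Π_{l ∉ S} e_{i,l}). For f : ℤ → ℂ define f̂_i := Σ_{k=0}^{N} f(k) • P_{i,k}, and let τ_r f(k) := f(k + r) for r ∈ ℤ. Fix r₁, r₂ with 0 ≤ r_i ≤ N and let R ∈ A commute with e_{i,l} for every i ∈ {1,2} and every l > r_i. For i = 1, 2, let Q_i^{(a)} := Π_{l=1}^{r_i} p_{i,l}^{(a)} and Q_i^{(b)} := Π_{l=1}^{r_i} p_{i,l}^{(b)}, where each p_{i,l}^{(•)} ∈ {e_{i,l}, g_{i,l}}, and let n_i^{(a)}, n_i^{(b)} denote the number of factors equal to g_{i,l} in Q_i^{(a)}, Q_i^{(b)} respectively; set Q^{(a)} := Q_1^{(a)} Q_2^{(a)}, Q^{(b)} := Q_1^{(b)} Q_2^{(b)}, and n_i := n_i^{(b)}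 − n_i^{(a)}. Then for all f₁, f₂ : ℤ → ℂ: Q^{(a)} · R · f̂₁^{(1)} · f̂₂^{(2)} · Q^{(b)} = Q^{(a)} · (τ_{n₁} f₁)̂^{(1)} · (τ_{n₂} f₂)̂^{(2)} · R · Q^{(b)}, where f̂^{(i)} := Σ_{k=0}^{N} f(k) • P_{i,k}. -/

import Mathlib

open Finset

/-- Product of a family of (pairwise commuting) elements over a finite index
set, taken in increasing order of the indices. -/
def oprod {ι M : Type*} [LinearOrder ι] [Monoid M] (S : Finset ι) (f : ι → M) : M :=
  ((S.sort (· ≤ ·)).map f).prod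

/-- The counting element
`P n = Σ_{S ⊆ {1,…,N}, |S| = n} (Π_{l ∈ S} (1 - e l)) · (Π_{l ∉ S} e l)`. -/
def badP {R : Type*} [Ring R] {N : ℕ} (e : Fin N → R) (n : ℕ) : R :=
  ∑ S ∈ powersetCard n (univ : Finset (Fin N)),
    oprod S (fun l => 1 - e l) * oprod Sᶜ e

/-- The weighting operator `f̂ := Σ_{k=0}^N f(k) • P_k` for `f : ℤ → ℂ`. -/
noncomputable def fhat {A : Type*} [Ring A] [Algebra ℂ A] {N : ℕ}
    (e : Fin N → A) (f : ℤ → ℂ) : A :=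
  ∑ k ∈ Finset.range (N + 1), f (k : ℤ) • badP e k

/-- The pattern product `Q = Π_{l=1}^{r} p_l` over the first `r` sites, where
`p_l = 1 - e_l` when `b l = true` and `p_l = e_l` otherwise. -/
def patProd {A : Type*} [Ring A] {N : ℕ} (e : Fin N → A) (r : ℕ)
    (b : Fin N → Bool) : A :=
  oprod (univ.filter fun l : Fin N => (l : ℕ) < r)
    (fun l => if b l then 1 - e l else e l)

/-- The number of `g`-factors (`b l = true`) among the first `r` sites. -/
def gcount {N : ℕ} (r : ℕ) (b : Fin N → Bool) : ℕ :=
  ((univ.filter fun l : Fin N => (l : ℕ) < r).filter fun l => b l = true).card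

/-! ### Generic `oprod` lemmas -/

theorem Multiset.noncommProd_congr'' {M : Type*} [Monoid M] {s t : Multiset M} (h : s = t) (c) :
    s.noncommProd c = t.noncommProd (h ▸ c) := by subst h; rfl

section Generic
variable {ι M : Type*} [LinearOrder ι] [Monoid M]

theorem oprod_eq_noncommProd (S : Finset ι) (f : ι → M)
    (h : (S : Set ι).Pairwise (Function.onFun Commute f)) :
    oprod S f = S.noncommProd f h := by
  rw [oprod, Finset.noncommProd,
    Multiset.noncommProd_congr''
      (show (S.1.map f) = (((S.sort (· ≤ ·)).map f : List M) : Multiset M) by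
        rw [← Finset.sort_eq (s := S) (r := (· ≤ ·))]; rfl),
    Multiset.noncommProd_coe]

theorem oprod_congr (S : Finset ι) (f g : ι → M) (h : ∀ l ∈ S, f l = g l) :
    oprod S f = oprod S g := by
  unfold oprod; congr 1
  exact List.map_congr_left fun a ha => h a (by simpa using ha)

theorem commute_oprod (x : M) (S : Finset ι) (f : ι → M)
    (h : ∀ l ∈ S, Commute x (f l)) : Commute x (oprod S f) := by
  apply Commute.list_prod_right
  intro y hy
  obtain ⟨l, hl, rfl⟩ := List.mem_map.1 hy
  exact h l (by simpa using hl)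

theorem oprod_union [DecidableEq ι] (S T : Finset ι) (f : ι → M) (hd : Disjoint S T)
    (h : ∀ x y, Commute (f x) (f y)) :
    oprod (S ∪ T) f = oprod S f * oprod T f := by
  rw [oprod_eq_noncommProd _ _ (fun x _ y _ _ => h x y),
      oprod_eq_noncommProd _ _ (fun x _ y _ _ => h x y),
      oprod_eq_noncommProd _ _ (fun x _ y _ _ => h x y)]
  exact Finset.noncommProd_union_of_disjoint hd f _

theorem oprod_mul_oprod (S : Finset ι) (f g : ι → M)
    (h1 : ∀ x y, Commute (f x) (f y)) (h2 : ∀ x y, Commute (g x) (g y))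
    (h3 : ∀ x y, Commute (g x) (f y)) :
    oprod S f * oprod S g = oprod S (fun l => f l * g l) := by
  rw [oprod_eq_noncommProd S f (fun x _ y _ _ => h1 x y),
      oprod_eq_noncommProd S g (fun x _ y _ _ => h2 x y),
      oprod_eq_noncommProd S (fun l => f l * g l)
        (Finset.noncommProd_mul_distrib_aux (fun x _ y _ _ => h1 x y)
          (fun x _ y _ _ => h2 x y) (fun x _ y _ _ => h3 x y))]
  exact (Finset.noncommProd_mul_distrib f g _ _ (fun x _ y _ _ => h3 x y)).symm

theorem oprod_eq_zero {M₀ : Type*} [MonoidWithZero M₀] (S : Finset ι) (f : ι → M₀)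
    (l : ι) (hl : l ∈ S) (h : f l = 0) : oprod S f = 0 :=
  List.prod_eq_zero (by rw [List.mem_map]; exact ⟨l, by simpa using hl, h⟩)

end Generic

/-! ### Tail counting operators -/

def Ptail {A : Type*} [Ring A] {N : ℕ} (e : Fin N → A) (r : ℕ) (j : ℕ) : A :=
  ∑ T ∈ powersetCard j (univ.filter fun l : Fin N => r ≤ (l : ℕ)),
    oprod T (fun l => 1 - e l) *
      oprod ((univ.filter fun l : Fin N => r ≤ (l : ℕ)) \ T) e

noncomputable def hop {A : Type*} [Ring A] [Algebra ℂ A] {N : ℕ}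
    (e : Fin N → A) (r : ℕ) (f : ℤ → ℂ) (c : ℤ) : A :=
  ∑ j ∈ Finset.range (N + 1), f ((j : ℤ) + c) • Ptail e r j

section Comm
variable {A : Type*} [Ring A] {N : ℕ} (e : Fin N → A)

theorem commute_sub_one (x y : A) (h : Commute x y) : Commute x (1 - y) :=
  (Commute.one_right x).sub_right h

theorem commute_atom {u v : A} (h : Commute u v) (p q : Prop) [Decidable p] [Decidable q] :
    Commute (if p then 1 - u else u) (if q then 1 - v else v) := by
  have h2 : Commute u (1 - v) := (Commute.one_right u).sub_right h
  have h3 : Commute (1 - u) v := (Commute.one_left v).sub_left h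
  have h4 : Commute (1 - u) (1 - v) := (Commute.one_right _).sub_right h3
  split_ifs <;> assumption

theorem commute_badP (x : A) (h : ∀ l, Commute x (e l)) (n : ℕ) :
    Commute x (badP e n) := by
  refine Commute.sum_right _ _ _ fun S _ => ?_
  exact (commute_oprod x _ _ fun l _ => (Commute.one_right x).sub_right (h l)).mul_right
    (commute_oprod x _ _ fun l _ => h l)

theorem commute_Ptail (x : A) (r j : ℕ)
    (h : ∀ l : Fin N, r ≤ (l : ℕ) → Commute x (e l)) :
    Commute x (Ptail e r j) := by
  refine Commute.sum_right _ _ _ fun T hT => ?_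
  have hT' := (mem_powersetCard.1 hT).1
  refine (commute_oprod x _ _ fun l hl => (Commute.one_right x).sub_right ?_).mul_right
    (commute_oprod x _ _ fun l hl => ?_)
  · exact h l (by have := hT' hl; simp at this; exact this)
  · exact h l (by have := mem_sdiff.1 hl; simp at this; exact this.1)

theorem commute_patProd (x : A) (r : ℕ) (b : Fin N → Bool) (h : ∀ l, Commute x (e l)) :
    Commute x (patProd e r b) := by
  refine commute_oprod x _ _ fun l _ => ?_
  by_cases hb : b l <;> simp [hb]
  · exact (Commute.one_right x).sub_right (h l)
  · exact h l

end Comm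

section CommAlg
variable {A : Type*} [Ring A] [Algebra ℂ A] {N : ℕ} (e : Fin N → A)

theorem commute_fhat (x : A) (h : ∀ l, Commute x (e l)) (f : ℤ → ℂ) :
    Commute x (fhat e f) :=
  Commute.sum_right _ _ _ fun k _ => (commute_badP e x h k).smul_right _

theorem commute_hop (x : A) (r : ℕ) (f : ℤ → ℂ) (c : ℤ)
    (h : ∀ l : Fin N, r ≤ (l : ℕ) → Commute x (e l)) :
    Commute x (hop e r f c) :=
  Commute.sum_right _ _ _ fun j _ => (commute_Ptail e x r j h).smul_right _

theorem hop_shift (r : ℕ) (f : ℤ → ℂ) (c d : ℤ) :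
    hop e r (fun k => f (k + d)) c = hop e r f (c + d) := by
  unfold hop
  exact Finset.sum_congr rfl fun j _ => by simp only []; rw [← add_assoc]

end CommAlg
section Main
variable {A : Type*} [Ring A] {N : ℕ} {e : Fin N → A}

theorem g_mul_g (hidem : ∀ l, e l * e l = e l) (l : Fin N) :
    (1 - e l) * (1 - e l) = 1 - e l := by
  rw [sub_mul, one_mul, mul_sub, mul_one, hidem l, sub_self, sub_zero]

theorem e_mul_g (hidem : ∀ l, e l * e l = e l) (l : Fin N) : e l * (1 - e l) = 0 := by
  rw [mul_sub, mul_one, hidem l, sub_self]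

theorem g_mul_e (hidem : ∀ l, e l * e l = e l) (l : Fin N) : (1 - e l) * e l = 0 := by
  rw [sub_mul, one_mul, hidem l, sub_self]

theorem head_kill (hidem : ∀ l, e l * e l = e l) (hcomm : ∀ l l', Commute (e l) (e l'))
    (r : ℕ) (b : Fin N → Bool) (S' : Finset (Fin N))
    (hS' : S' ⊆ univ.filter fun l : Fin N => (l : ℕ) < r) :
    patProd e r b * (oprod S' (fun l => 1 - e l) *
      oprod ((univ.filter fun l : Fin N => (l : ℕ) < r) \ S') e) =
    if S' = (univ.filter fun l : Fin N => (l : ℕ) < r).filter (fun l => b l = true)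
      then patProd e r b else 0 := by
  classical
  set head := univ.filter fun l : Fin N => (l : ℕ) < r with hhead
  set q : Fin N → A := fun l => if l ∈ S' then 1 - e l else e l with hq
  set p : Fin N → A := fun l => if b l then 1 - e l else e l with hp
  have hcq : ∀ x y, Commute (q x) (q y) := fun x y => commute_atom (hcomm x y) _ _
  have hcp : ∀ x y, Commute (p x) (p y) := fun x y => commute_atom (hcomm x y) _ _
  have hcqp : ∀ x y, Commute (q x) (p y) := fun x y => commute_atom (hcomm x y) _ _
  have h1 : oprod S' (fun l => 1 - e l) = oprod S' q :=
    oprod_congr _ _ _ fun l hl => by simp [hq, hl]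
  have h2 : oprod (head \ S') e = oprod (head \ S') q :=
    oprod_congr _ _ _ fun l hl => by simp [hq, (mem_sdiff.1 hl).2]
  have h4 : oprod S' q * oprod (head \ S') q = oprod head q := by
    rw [← oprod_union _ _ _ disjoint_sdiff hcq, union_sdiff_of_subset hS']
  have h5 : patProd e r b * oprod head q = oprod head (fun l => p l * q l) := by
    rw [patProd, ← hhead, ← hp]
    exact oprod_mul_oprod _ _ _ hcp hcq hcqp
  rw [h1, h2, h4, h5]
  by_cases hSB : S' = head.filter (fun l => b l = true)
  · rw [if_pos hSB, patProd, ← hhead, ← hp]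
    refine oprod_congr _ _ _ fun l hl => ?_
    by_cases hbl : b l = true
    · have hlS : l ∈ S' := by rw [hSB]; exact mem_filter.2 ⟨hl, hbl⟩
      simp only [hp, hq, hbl, if_true, hlS]
      exact g_mul_g hidem l
    · have hlS : l ∉ S' := by rw [hSB]; intro h; exact hbl (mem_filter.1 h).2
      simp only [hp, hq, hbl, if_false, hlS]
      exact hidem l
  · rw [if_neg hSB]
    rw [Finset.ext_iff] at hSB
    push_neg at hSB
    obtain ⟨l, hl⟩ := hSB
    rcases hl with ⟨hlS, hlB⟩ | ⟨hlS, hlB⟩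
    · have hlh : l ∈ head := hS' hlS
      have hbl : ¬ b l = true := fun hb => hlB (mem_filter.2 ⟨hlh, hb⟩)
      refine oprod_eq_zero _ _ l hlh ?_
      simp only [hp, hq, hbl, if_false, hlS, if_true]
      exact e_mul_g hidem l
    · have hlh : l ∈ head := (mem_filter.1 hlB).1
      have hbl : b l = true := (mem_filter.1 hlB).2
      refine oprod_eq_zero _ _ l hlh ?_
      simp only [hp, hq, hbl, if_true, hlS, if_false]
      exact g_mul_e hidem l

end Main
section Main2
variable {A : Type*} [Ring A] {N : ℕ} {e : Fin N → A}

theorem patProd_mul_badP (hidem : ∀ l, e l * e l = e l)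
    (hcomm : ∀ l l', Commute (e l) (e l')) (r : ℕ) (b : Fin N → Bool) (k : ℕ) :
    patProd e r b * badP e k =
      if gcount r b ≤ k then patProd e r b * Ptail e r (k - gcount r b) else 0 := by
  classical
  set head := univ.filter (fun l : Fin N => (l : ℕ) < r) with hhead
  set tail := univ.filter (fun l : Fin N => r ≤ (l : ℕ)) with htail
  set B := head.filter (fun l => b l = true) with hB
  have hgB : gcount r b = B.card := rfl
  have hBh : B ⊆ head := by rw [hB]; exact filter_subset _ _
  have hcg : ∀ x y : Fin N, Commute ((1 : A) - e x) (1 - e y) := fun x y =>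
    (Commute.one_right _).sub_right ((Commute.one_left _).sub_left (hcomm x y))
  have hdisj : Disjoint head tail := by
    rw [Finset.disjoint_left]
    intro a ha hb
    rw [hhead, mem_filter] at ha
    rw [htail, mem_filter] at hb
    omega
  have hsplit : ∀ S : Finset (Fin N), (S ∩ head) ∪ (S ∩ tail) = S := by
    intro S; ext l
    simp only [mem_union, mem_inter, hhead, htail, mem_filter, mem_univ, true_and]
    constructor
    · rintro (⟨h, _⟩ | ⟨h, _⟩) <;> exact h
    · intro h
      rcases lt_or_ge ((l : ℕ)) r with h' | h'
      · exact Or.inl ⟨h, h'⟩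
      · exact Or.inr ⟨h, h'⟩
  have hsplitC : ∀ S : Finset (Fin N),
      (head \ (S ∩ head)) ∪ (tail \ (S ∩ tail)) = Sᶜ := by
    intro S; ext l
    simp only [mem_union, mem_sdiff, mem_inter, mem_compl, hhead, htail, mem_filter,
      mem_univ, true_and]
    rcases lt_or_ge ((l : ℕ)) r with h' | h' <;> by_cases hS : l ∈ S <;>
      simp [h', hS] <;> try omega
  have hctg : ∀ T U : Finset (Fin N),
      Commute (oprod T (fun l => (1 : A) - e l)) (oprod U e) := fun T U =>
    commute_oprod _ _ _ fun l _ =>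
      (commute_oprod (e l) T _ fun l' _ => commute_sub_one _ _ (hcomm l l')).symm
  have hterm : ∀ S ∈ powersetCard k (univ : Finset (Fin N)),
      patProd e r b * (oprod S (fun l => 1 - e l) * oprod Sᶜ e) =
      if S ∩ head = B then
        patProd e r b *
          (oprod (S ∩ tail) (fun l => 1 - e l) * oprod (tail \ (S ∩ tail)) e)
      else 0 := by
    intro S _
    have hgs : oprod S (fun l => (1 : A) - e l) =
        oprod (S ∩ head) (fun l => 1 - e l) * oprod (S ∩ tail) (fun l => 1 - e l) := by
      conv_lhs => rw [← hsplit S]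
      exact oprod_union _ _ _ (hdisj.mono inter_subset_right inter_subset_right) hcg
    have hes : oprod Sᶜ e =
        oprod (head \ (S ∩ head)) e * oprod (tail \ (S ∩ tail)) e := by
      conv_lhs => rw [← hsplitC S]
      exact oprod_union _ _ _ (hdisj.mono sdiff_subset sdiff_subset) hcomm
    rw [hgs, hes,
      (hctg (S ∩ tail) (head \ (S ∩ head))).mul_mul_mul_comm, ← mul_assoc,
      head_kill hidem hcomm r b (S ∩ head) inter_subset_right, ite_mul, zero_mul]
  rw [badP, Finset.mul_sum, Finset.sum_congr rfl hterm]
  by_cases hmk : gcount r b ≤ k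
  · rw [if_pos hmk, Ptail, Finset.mul_sum, ← htail, ← Finset.sum_filter]
    refine Finset.sum_nbij' (fun S => S ∩ tail) (fun T => B ∪ T) ?_ ?_ ?_ ?_ ?_
    · intro S hS
      rw [mem_filter, mem_powersetCard] at hS
      obtain ⟨⟨_, hcard⟩, hSB⟩ := hS
      rw [mem_powersetCard]
      refine ⟨inter_subset_right, ?_⟩
      have h1 : (S ∩ head).card + (S ∩ tail).card = S.card := by
        rw [← card_union_of_disjoint (hdisj.mono inter_subset_right inter_subset_right),
          hsplit S]
      rw [hSB] at h1
      rw [hgB] at hmk ⊢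
      omega
    · intro T hT
      rw [mem_powersetCard] at hT
      obtain ⟨hTt, hTcard⟩ := hT
      have hdBT : Disjoint B T := hdisj.mono hBh hTt
      rw [mem_filter, mem_powersetCard]
      refine ⟨⟨subset_univ _, ?_⟩, ?_⟩
      · rw [card_union_of_disjoint hdBT, hTcard, ← hgB]
        omega
      · ext l
        simp only [mem_inter, mem_union]
        constructor
        · rintro ⟨hl | hl, hlh⟩
          · exact hl
          · exact absurd hlh (Finset.disjoint_right.1 hdisj (hTt hl))
        · intro hl
          exact ⟨Or.inl hl, hBh hl⟩
    · intro S hS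
      rw [mem_filter] at hS
      rw [← hS.2, hsplit S]
    · intro T hT
      rw [mem_powersetCard] at hT
      ext l
      simp only [mem_inter, mem_union]
      constructor
      · rintro ⟨hl | hl, hlt⟩
        · exact absurd hlt (Finset.disjoint_left.1 hdisj (hBh hl))
        · exact hl
      · intro hl
        exact ⟨Or.inr hl, hT.1 hl⟩
    · intro S _
      rfl
  · rw [if_neg hmk]
    refine Finset.sum_eq_zero fun S hS => ?_
    rw [if_neg]
    intro hSB
    apply hmk
    rw [mem_powersetCard] at hS
    calc gcount r b = B.card := hgB
      _ ≤ S.card := card_le_card (hSB ▸ inter_subset_left)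
      _ = k := hS.2

end Main2
section Main3
variable {A : Type*} [Ring A] [Algebra ℂ A] {N : ℕ} {e : Fin N → A}

theorem Ptail_eq_zero (r j : ℕ)
    (hj : (univ.filter fun l : Fin N => r ≤ (l : ℕ)).card < j) : Ptail e r j = 0 := by
  rw [Ptail, Finset.powersetCard_eq_empty.2 hj, Finset.sum_empty]

theorem patProd_mul_fhat (hidem : ∀ l, e l * e l = e l)
    (hcomm : ∀ l l', Commute (e l) (e l')) (r : ℕ) (hr : r ≤ N) (b : Fin N → Bool)
    (f : ℤ → ℂ) :
    patProd e r b * fhat e f = patProd e r b * hop e r f (gcount r b) := by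
  classical
  generalize hm : gcount r b = m
  -- card facts
  have hdisj : Disjoint (univ.filter fun l : Fin N => (l : ℕ) < r)
      (univ.filter fun l : Fin N => r ≤ (l : ℕ)) := by
    rw [Finset.disjoint_left]
    intro a ha hb
    rw [mem_filter] at ha hb
    omega
  have hunion : (univ.filter fun l : Fin N => (l : ℕ) < r) ∪
      (univ.filter fun l : Fin N => r ≤ (l : ℕ)) = univ := by
    ext l
    simp only [mem_union, mem_filter, mem_univ, true_and, iff_true]
    omega
  have hcards : (univ.filter fun l : Fin N => (l : ℕ) < r).card +
      (univ.filter fun l : Fin N => r ≤ (l : ℕ)).card = N := by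
    rw [← card_union_of_disjoint hdisj, hunion, card_univ, Fintype.card_fin]
  have hmhead : m ≤ (univ.filter fun l : Fin N => (l : ℕ) < r).card :=
    hm ▸ Finset.card_le_card (Finset.filter_subset _ _)
  have htcard : (univ.filter fun l : Fin N => r ≤ (l : ℕ)).card ≤ N - m := by omega
  have hmN : m ≤ N := le_trans hmhead (by omega)
  rw [fhat, hop, Finset.mul_sum, Finset.mul_sum]
  simp_rw [mul_smul_comm]
  rw [Finset.sum_congr rfl fun k _ => by
    rw [patProd_mul_badP hidem hcomm r b k, hm, smul_ite, smul_zero]]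
  rw [← Finset.sum_filter]
  have hRHS : ∑ j ∈ Finset.range (N + 1), f ((j : ℤ) + (m : ℤ)) • (patProd e r b * Ptail e r j)
      = ∑ j ∈ Finset.range (N + 1 - m), f ((j : ℤ) + (m : ℤ)) • (patProd e r b * Ptail e r j) := by
    refine (Finset.sum_subset (Finset.range_subset_range.2 (by omega)) fun j hj hj' => ?_).symm
    rw [Finset.mem_range] at hj hj'
    rw [Ptail_eq_zero r j (by omega), mul_zero, smul_zero]
  rw [hRHS]
  refine Finset.sum_nbij' (fun k => k - m) (fun j => j + m) ?_ ?_ ?_ ?_ ?_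
  · intro k hk
    rw [mem_filter, Finset.mem_range] at hk
    rw [Finset.mem_range]
    omega
  · intro j hj
    rw [Finset.mem_range] at hj
    rw [mem_filter, Finset.mem_range]
    omega
  · intro k hk
    rw [mem_filter] at hk
    omega
  · intro j _
    omega
  · intro k hk
    rw [mem_filter] at hk
    have : ((k - m : ℕ) : ℤ) + (m : ℤ) = (k : ℤ) := by
      have := hk.2
      omega
    rw [this]

end Main3

/-- **Two-class Pickl shift lemma** (Lemma 5.2 of the paper, adapted from
Knowles–Pickl).  With two commuting families of idempotents `e i l`
(`i ∈ {1,2}`, `l ∈ {1,…,N}`), counting operators `P_{i,k}`, weighting operators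
`f̂^{(i)} = Σ_k f(k) • P_{i,k}` and shifts `τ_r f (k) = f (k + r)`, for any `R`
commuting with all `e i l` with `l > r i`, and any pattern products
`Q^{(a)} = Q₁^{(a)} Q₂^{(a)}`, `Q^{(b)} = Q₁^{(b)} Q₂^{(b)}` over the first
`r i` sites of each class with `g`-counts `n_i^{(a)}, n_i^{(b)}`, setting
`n_i = n_i^{(b)} - n_i^{(a)}`, one has
`Q^{(a)} R f̂₁^{(1)} f̂₂^{(2)} Q^{(b)} = Q^{(a)} (τ_{n₁}f₁)̂^{(1)} (τ_{n₂}f₂)̂^{(2)} R Q^{(b)}`. -/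
theorem pickl_shift_two_class {A : Type*} [Ring A] [Algebra ℂ A] {N : ℕ}
    (hN : 1 ≤ N) (e : Fin 2 → Fin N → A)
    (hidem : ∀ i l, e i l * e i l = e i l)
    (hcomm : ∀ i l i' l', Commute (e i l) (e i' l'))
    (r : Fin 2 → ℕ) (hr : ∀ i, r i ≤ N)
    (R : A) (hR : ∀ i (l : Fin N), r i ≤ (l : ℕ) → Commute R (e i l))
    (ba bb : Fin 2 → Fin N → Bool) (f₁ f₂ : ℤ → ℂ) :
    (patProd (e 0) (r 0) (ba 0) * patProd (e 1) (r 1) (ba 1)) * R *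
        fhat (e 0) f₁ * fhat (e 1) f₂ *
        (patProd (e 0) (r 0) (bb 0) * patProd (e 1) (r 1) (bb 1))
      = (patProd (e 0) (r 0) (ba 0) * patProd (e 1) (r 1) (ba 1)) *
        fhat (e 0)
          (fun k => f₁ (k + ((gcount (r 0) (bb 0) : ℤ) - (gcount (r 0) (ba 0) : ℤ)))) *
        fhat (e 1)
          (fun k => f₂ (k + ((gcount (r 1) (bb 1) : ℤ) - (gcount (r 1) (ba 1) : ℤ)))) *
        R *
        (patProd (e 0) (r 0) (bb 0) * patProd (e 1) (r 1) (bb 1)) := by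
    classical
  have hc00 : ∀ l l', Commute (e 0 l) (e 0 l') := fun l l' => hcomm 0 l 0 l'
  have hc11 : ∀ l l', Commute (e 1 l) (e 1 l') := fun l l' => hcomm 1 l 1 l'
  -- key identities
  have keyb0 : patProd (e 0) (r 0) (bb 0) * fhat (e 0) f₁ =
      patProd (e 0) (r 0) (bb 0) * hop (e 0) (r 0) f₁ (gcount (r 0) (bb 0)) :=
    patProd_mul_fhat (hidem 0) hc00 (r 0) (hr 0) (bb 0) f₁
  have keyb1 : patProd (e 1) (r 1) (bb 1) * fhat (e 1) f₂ =
      patProd (e 1) (r 1) (bb 1) * hop (e 1) (r 1) f₂ (gcount (r 1) (bb 1)) :=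
    patProd_mul_fhat (hidem 1) hc11 (r 1) (hr 1) (bb 1) f₂
  have keya0 : patProd (e 0) (r 0) (ba 0) *
      fhat (e 0) (fun k => f₁ (k + ((gcount (r 0) (bb 0) : ℤ) - (gcount (r 0) (ba 0) : ℤ)))) =
      patProd (e 0) (r 0) (ba 0) * hop (e 0) (r 0) f₁ (gcount (r 0) (bb 0)) := by
    rw [patProd_mul_fhat (hidem 0) hc00 (r 0) (hr 0) (ba 0) _, hop_shift,
      show ((gcount (r 0) (ba 0) : ℤ) +
          ((gcount (r 0) (bb 0) : ℤ) - (gcount (r 0) (ba 0) : ℤ))) =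
        ((gcount (r 0) (bb 0) : ℤ)) from by ring]
  have keya1 : patProd (e 1) (r 1) (ba 1) *
      fhat (e 1) (fun k => f₂ (k + ((gcount (r 1) (bb 1) : ℤ) - (gcount (r 1) (ba 1) : ℤ)))) =
      patProd (e 1) (r 1) (ba 1) * hop (e 1) (r 1) f₂ (gcount (r 1) (bb 1)) := by
    rw [patProd_mul_fhat (hidem 1) hc11 (r 1) (hr 1) (ba 1) _, hop_shift,
      show ((gcount (r 1) (ba 1) : ℤ) +
          ((gcount (r 1) (bb 1) : ℤ) - (gcount (r 1) (ba 1) : ℤ))) =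
        ((gcount (r 1) (bb 1) : ℤ)) from by ring]
  -- commutation facts
  have cF1Qb0 : Commute (fhat (e 1) f₂) (patProd (e 0) (r 0) (bb 0)) :=
    commute_patProd (e 0) _ (r 0) (bb 0) fun l =>
      (commute_fhat (e 1) (e 0 l) (fun l' => hcomm 0 l 1 l') f₂).symm
  have cF0Qb0 : Commute (fhat (e 0) f₁) (patProd (e 0) (r 0) (bb 0)) :=
    commute_patProd (e 0) _ (r 0) (bb 0) fun l =>
      (commute_fhat (e 0) (e 0 l) (fun l' => hcomm 0 l 0 l') f₁).symm
  have cF1Qb1 : Commute (fhat (e 1) f₂) (patProd (e 1) (r 1) (bb 1)) :=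
    commute_patProd (e 1) _ (r 1) (bb 1) fun l =>
      (commute_fhat (e 1) (e 1 l) (fun l' => hcomm 1 l 1 l') f₂).symm
  have cQb0H0 : Commute (patProd (e 0) (r 0) (bb 0))
      (hop (e 0) (r 0) f₁ (gcount (r 0) (bb 0))) :=
    commute_hop (e 0) _ (r 0) f₁ _ fun l _ =>
      (commute_patProd (e 0) (e 0 l) (r 0) (bb 0) fun l' => hcomm 0 l 0 l').symm
  have cQb1H1 : Commute (patProd (e 1) (r 1) (bb 1))
      (hop (e 1) (r 1) f₂ (gcount (r 1) (bb 1))) :=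
    commute_hop (e 1) _ (r 1) f₂ _ fun l _ =>
      (commute_patProd (e 1) (e 1 l) (r 1) (bb 1) fun l' => hcomm 1 l 1 l').symm
  have cQb0H1 : Commute (patProd (e 0) (r 0) (bb 0))
      (hop (e 1) (r 1) f₂ (gcount (r 1) (bb 1))) :=
    commute_hop (e 1) _ (r 1) f₂ _ fun l _ =>
      (commute_patProd (e 0) (e 1 l) (r 0) (bb 0) fun l' => hcomm 1 l 0 l').symm
  have cRH0 : Commute R (hop (e 0) (r 0) f₁ (gcount (r 0) (bb 0))) :=
    commute_hop (e 0) R (r 0) f₁ _ fun l hl => hR 0 l hl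
  have cRH1 : Commute R (hop (e 1) (r 1) f₂ (gcount (r 1) (bb 1))) :=
    commute_hop (e 1) R (r 1) f₂ _ fun l hl => hR 1 l hl
  have cQa1G0 : Commute (patProd (e 1) (r 1) (ba 1))
      (fhat (e 0)
        (fun k => f₁ (k + ((gcount (r 0) (bb 0) : ℤ) - (gcount (r 0) (ba 0) : ℤ))))) :=
    commute_fhat (e 0) _ (fun l =>
      (commute_patProd (e 1) (e 0 l) (r 1) (ba 1) fun l' => hcomm 0 l 1 l').symm) _
  have cH0Qa1 : Commute (hop (e 0) (r 0) f₁ (gcount (r 0) (bb 0)))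
      (patProd (e 1) (r 1) (ba 1)) :=
    (commute_hop (e 0) _ (r 0) f₁ _ fun l _ =>
      (commute_patProd (e 1) (e 0 l) (r 1) (ba 1) fun l' => hcomm 0 l 1 l').symm).symm
  -- abbreviate
  set Qa0 := patProd (e 0) (r 0) (ba 0) with hQa0
  set Qa1 := patProd (e 1) (r 1) (ba 1) with hQa1
  set Qb0 := patProd (e 0) (r 0) (bb 0) with hQb0
  set Qb1 := patProd (e 1) (r 1) (bb 1) with hQb1
  set F0 := fhat (e 0) f₁ with hF0
  set F1 := fhat (e 1) f₂ with hF1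
  set G0 := fhat (e 0)
    (fun k => f₁ (k + ((gcount (r 0) (bb 0) : ℤ) - (gcount (r 0) (ba 0) : ℤ)))) with hG0
  set G1 := fhat (e 1)
    (fun k => f₂ (k + ((gcount (r 1) (bb 1) : ℤ) - (gcount (r 1) (ba 1) : ℤ)))) with hG1
  set H0 := hop (e 0) (r 0) f₁ (gcount (r 0) (bb 0)) with hH0
  set H1 := hop (e 1) (r 1) f₂ (gcount (r 1) (bb 1)) with hH1
  have keyb0' : ∀ X : A, Qb0 * (F0 * X) = Qb0 * (H0 * X) := fun X => by
    rw [← mul_assoc, keyb0, mul_assoc]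
  have keya0' : ∀ X : A, Qa0 * (G0 * X) = Qa0 * (H0 * X) := fun X => by
    rw [← mul_assoc, keya0, mul_assoc]
  have keya1' : ∀ X : A, Qa1 * (G1 * X) = Qa1 * (H1 * X) := fun X => by
    rw [← mul_assoc, keya1, mul_assoc]
  simp only [mul_assoc]
  rw [cF1Qb0.left_comm, cF0Qb0.left_comm, keyb0', cF1Qb1.eq, keyb1,
    cQb0H0.left_comm, cQb1H1.eq, cQb0H1.left_comm, cRH0.left_comm, cRH1.left_comm,
    cQa1G0.left_comm, keya0', keya1', cH0Qa1.left_comm]
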